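/- Let k be a field of characteristic zero and let A_1,...,A_m (m ≥ 2) be pairwise commuting n×n matrices over k. If at most one of the matrices A_1,...,A_m fails to be diagonalizable (over the algebraic closure of k), then there exists an n×n matrix C over k such that each A_i is a polynomial in C with coefficients in k. -/

import Mathlib

open Polynomial Algebra Module

universe u v

section Part1

variable {k : Type*} [Field k]

theorem aux_adjoin_top_of_subsingleton {R : Type*} [CommRing R] [Algebra k R] [Subsingleton R]
    (x : R) : Algebra.adjoin k {x} = ⊤ :=
  top_le_iff.mp fun y _ => (Subsingleton.elim y x) ▸ Algebra.subset_adjoin rfl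

theorem aux_adjoin_top_map {A B : Type*} [Semiring A] [Semiring B] [Algebra k A] [Algebra k B]
    (e : A ≃ₐ[k] B) {γ : A} (h : Algebra.adjoin k {γ} = ⊤) :
    Algebra.adjoin k {e γ} = ⊤ := by
  have h2 : Algebra.adjoin k ((e : A →ₐ[k] B) '' {γ}) = ⊤ := by
    rw [← AlgHom.map_adjoin, h]
    exact (Algebra.map_top _).trans ((AlgHom.range_eq_top _).mpr e.surjective)
  simpa using h2

theorem aux_core_adjoin {R : Type*} [CommRing R] [Algebra k R] {a b : R}
    (htop : Algebra.adjoin k {a, b} = ⊤) (hb : IsNilpotent b) {f : k[X]}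
    (hf0 : aeval a f = 0) (hf' : IsUnit (aeval a (derivative f))) :
    Algebra.adjoin k {a + b} = ⊤ := by
  set C := a + b with hC
  obtain ⟨z, hz⟩ := Polynomial.binomExpansion (f.map (algebraMap k R)) a b
  have hmape : ∀ (g : k[X]) (x : R), (g.map (algebraMap k R)).eval x = aeval x g := fun g x => by
    rw [Polynomial.eval_map]; rfl
  rw [Polynomial.derivative_map, hmape, hmape, hmape, ← hC] at hz
  have hF : aeval C f = (aeval a (derivative f) + z * b) * b := by
    rw [hz, hf0]; ring
  have hnil : IsNilpotent (z * b) := by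
    rw [mul_comm]; exact (Commute.all b z).isNilpotent_mul_right hb
  have hunit : IsUnit (aeval a (derivative f) + z * b) :=
    hnil.isUnit_add_left_of_commute hf' (Commute.all _ _)
  obtain ⟨w, hw⟩ := hunit
  have hbF : b = aeval C f * ↑w⁻¹ := by
    rw [hF, ← hw, mul_comm (↑w : R) b, mul_assoc, Units.mul_inv, mul_one]
  have step : ∀ x : R, ∃ (q : k[X]) (r : R), x = aeval C q + b * r := by
    intro x
    have hx : x ∈ Algebra.adjoin k {a, b} := htop ▸ trivial
    induction hx using Algebra.adjoin_induction with
    | mem x hx =>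
      rcases hx with rfl | rfl
      · exact ⟨X, -1, by rw [aeval_X, hC]; ring⟩
      · exact ⟨0, 1, by simp⟩
    | algebraMap r => exact ⟨Polynomial.C r, 0, by simp⟩
    | add x y hx hy ihx ihy =>
      obtain ⟨q1, r1, h1⟩ := ihx; obtain ⟨q2, r2, h2⟩ := ihy
      exact ⟨q1 + q2, r1 + r2, by rw [h1, h2, map_add]; ring⟩
    | mul x y hx hy ihx ihy =>
      obtain ⟨q1, r1, h1⟩ := ihx; obtain ⟨q2, r2, h2⟩ := ihy
      exact ⟨q1 * q2, r1 * aeval C q2 + aeval C q1 * r2 + b * (r1 * r2),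
        by rw [h1, h2, map_mul]; ring⟩
  have iter : ∀ (j : ℕ) (x : R), ∃ (q : k[X]) (r : R), x = aeval C q + (aeval C f) ^ j * r := by
    intro j
    induction j with
    | zero => intro x; exact ⟨0, x, by simp⟩
    | succ j ih =>
      intro x
      obtain ⟨q, r, hqr⟩ := ih x
      obtain ⟨q', r', h'⟩ := step r
      refine ⟨q + f ^ j * q', (↑w⁻¹ : R) * r', ?_⟩
      rw [hqr, h', hbF, map_add, map_mul, map_pow, pow_succ]
      ring
  obtain ⟨e, he⟩ := hb
  have hFe : (aeval C f) ^ e = 0 := by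
    rw [hF, mul_pow, he, mul_zero]
  rw [Algebra.eq_top_iff]
  intro x
  obtain ⟨q, r, hqr⟩ := iter e x
  rw [hqr, hFe, zero_mul, add_zero, Algebra.adjoin_singleton_eq_range_aeval]
  exact ⟨q, rfl⟩

theorem aux_prod_monogenic [CharZero k] {A B : Type*} [CommRing A] [CommRing B]
    [Algebra k A] [Algebra k B] [Module.Finite k A] [Module.Finite k B]
    (hA : ∃ α : A, Algebra.adjoin k {α} = ⊤) (hB : ∃ β : B, Algebra.adjoin k {β} = ⊤) :
    ∃ γ : A × B, Algebra.adjoin k {γ} = ⊤ := by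
  classical
  obtain ⟨α, hα⟩ := hA; obtain ⟨β, hβ⟩ := hB
  have hαint : IsIntegral k α := IsIntegral.of_finite k α
  have hβint : IsIntegral k β := IsIntegral.of_finite k β
  have hf0 : minpoly k α ≠ 0 := minpoly.ne_zero hαint
  have hg0 : minpoly k β ≠ 0 := minpoly.ne_zero hβint
  have hfg : minpoly k α * minpoly k β ≠ 0 := mul_ne_zero hf0 hg0
  obtain ⟨c, hcc⟩ : ∃ c : k, algebraMap k (SplittingField (minpoly k α * minpoly k β)) c ∉
      (Finset.image₂ (· - ·)
        ((minpoly k β).aroots (SplittingField (minpoly k α * minpoly k β))).toFinset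
        ((minpoly k α).aroots (SplittingField (minpoly k α * minpoly k β))).toFinset : Finset _) := by
    set L := SplittingField (minpoly k α * minpoly k β)
    set Bad : Finset L := Finset.image₂ (· - ·) ((minpoly k β).aroots L).toFinset
      ((minpoly k α).aroots L).toFinset
    have hfin : Set.Finite ((algebraMap k L) ⁻¹' ↑Bad) :=
      Set.Finite.preimage ((algebraMap k L).injective.injOn) Bad.finite_toSet
    obtain ⟨c, hc⟩ := hfin.infinite_compl.nonempty
    exact ⟨c, hc⟩
  set L := SplittingField (minpoly k α * minpoly k β) with hL
  have hsplits := SplittingField.splits (minpoly k α * minpoly k β)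
  have hgsplit : Splits ((minpoly k β).map (algebraMap k L)) :=
    Splits.of_dvd hsplits (Polynomial.map_ne_zero hfg) (Polynomial.map_dvd _ (dvd_mul_left _ _))
  have hfc : minpoly k (α + algebraMap k A c) = (minpoly k α).comp (X - Polynomial.C c) :=
    minpoly.add_algebraMap α c
  have hcop : IsCoprime (minpoly k (α + algebraMap k A c)) (minpoly k β) := by
    rw [hfc]
    by_contra hncop
    have hfcne : (minpoly k α).comp (X - Polynomial.C c) ≠ 0 :=
      ((minpoly.monic hαint).comp_X_sub_C c).ne_zero
    have hd1 : gcd ((minpoly k α).comp (X - Polynomial.C c)) (minpoly k β) ∣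
        (minpoly k α).comp (X - Polynomial.C c) := gcd_dvd_left _ _
    have hd2 : gcd ((minpoly k α).comp (X - Polynomial.C c)) (minpoly k β) ∣ minpoly k β :=
      gcd_dvd_right _ _
    have hdunit : ¬ IsUnit (gcd ((minpoly k α).comp (X - Polynomial.C c)) (minpoly k β)) :=
      fun h => hncop ((gcd_isUnit_iff _ _).mp h)
    have hddeg : (gcd ((minpoly k α).comp (X - Polynomial.C c)) (minpoly k β)).degree ≠ 0 :=
      fun h => hdunit (isUnit_iff_degree_eq_zero.mpr h)
    have hdsplit : Splits ((gcd ((minpoly k α).comp (X - Polynomial.C c))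
        (minpoly k β)).map (algebraMap k L)) :=
      Splits.of_dvd hgsplit (Polynomial.map_ne_zero hg0) (Polynomial.map_dvd _ hd2)
    obtain ⟨r, hr⟩ := Splits.exists_eval_eq_zero hdsplit (by rwa [degree_map])
    have hr' : aeval r (gcd ((minpoly k α).comp (X - Polynomial.C c)) (minpoly k β)) = 0 := by
      rwa [eval_map_algebraMap] at hr
    have hrg : aeval r (minpoly k β) = 0 := by
      have h := map_dvd (aeval r) hd2
      rw [hr'] at h
      exact zero_dvd_iff.mp h
    have hrfc : aeval r ((minpoly k α).comp (X - Polynomial.C c)) = 0 := by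
      have h := map_dvd (aeval r) hd1
      rw [hr'] at h
      exact zero_dvd_iff.mp h
    have hs : aeval (r - algebraMap k L c) (minpoly k α) = 0 := by
      rw [aeval_comp] at hrfc; simpa using hrfc
    have h1 : r ∈ ((minpoly k β).aroots L).toFinset := by
      rw [Multiset.mem_toFinset, mem_aroots]; exact ⟨hg0, hrg⟩
    have h2 : (r - algebraMap k L c) ∈ ((minpoly k α).aroots L).toFinset := by
      rw [Multiset.mem_toFinset, mem_aroots]; exact ⟨hf0, hs⟩
    exact hcc (Finset.mem_image₂.mpr ⟨r, h1, r - algebraMap k L c, h2, by ring⟩)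
  obtain ⟨u, v, huv⟩ := hcop
  refine ⟨(α + algebraMap k A c, β), ?_⟩
  have hfst : ∀ p : k[X], (aeval ((α + algebraMap k A c, β) : A × B) p).1 =
      aeval (α + algebraMap k A c) p := fun p =>
    (aeval_algHom_apply (AlgHom.fst k A B) _ p).symm
  have hsnd : ∀ p : k[X], (aeval ((α + algebraMap k A c, β) : A × B) p).2 = aeval β p := fun p =>
    (aeval_algHom_apply (AlgHom.snd k A B) _ p).symm
  have hva : aeval (α + algebraMap k A c) (v * minpoly k β) = 1 := by
    have h := congrArg (aeval (α + algebraMap k A c)) huv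
    rw [map_add, map_mul, map_mul, map_one, minpoly.aeval, mul_zero, zero_add] at h
    rw [map_mul]; exact h
  have hub : aeval β (u * minpoly k (α + algebraMap k A c)) = 1 := by
    have h := congrArg (aeval β) huv
    rw [map_add, map_mul, map_mul, map_one, minpoly.aeval, mul_zero, add_zero] at h
    rw [map_mul]; exact h
  rw [Algebra.eq_top_iff]
  rintro ⟨x, y⟩
  obtain ⟨p, hp⟩ : ∃ p, aeval (α + algebraMap k A c) p = x := by
    have hx : x ∈ Algebra.adjoin k {α + algebraMap k A c} := by
      have hle : Algebra.adjoin k {α} ≤ Algebra.adjoin k {α + algebraMap k A c} := by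
        refine Algebra.adjoin_le ?_
        rw [Set.singleton_subset_iff]
        have hmem := sub_mem (Algebra.subset_adjoin (Set.mem_singleton (α + algebraMap k A c)))
          (Subalgebra.algebraMap_mem (Algebra.adjoin k {α + algebraMap k A c}) c)
        simpa using hmem
      exact hle (hα ▸ trivial)
    rwa [Algebra.adjoin_singleton_eq_range_aeval, AlgHom.mem_range] at hx
  obtain ⟨q, hq⟩ : ∃ q, aeval β q = y := by
    have hy : y ∈ Algebra.adjoin k {β} := hβ ▸ trivial
    rwa [Algebra.adjoin_singleton_eq_range_aeval, AlgHom.mem_range] at hy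
  have hum : aeval (α + algebraMap k A c) (u * minpoly k (α + algebraMap k A c)) = 0 := by
    rw [map_mul, minpoly.aeval, mul_zero]
  have hvg : aeval β (v * minpoly k β) = 0 := by
    rw [map_mul, minpoly.aeval, mul_zero]
  have key : aeval ((α + algebraMap k A c, β) : A × B)
      (v * minpoly k β * p + u * minpoly k (α + algebraMap k A c) * q) = (x, y) := by
    refine Prod.ext ?_ ?_
    · simp only [map_add, map_mul, Prod.fst_add, Prod.fst_mul, hfst, minpoly.aeval, mul_zero, zero_mul, add_zero]
      have h1 : aeval (α + algebraMap k A c) v * aeval (α + algebraMap k A c) (minpoly k β) = 1 :=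
        by rw [← map_mul]; exact hva
      rw [h1, one_mul, hp]
    · simp only [map_add, map_mul, Prod.snd_add, Prod.snd_mul, hsnd, minpoly.aeval, mul_zero, zero_mul, zero_add]
      have h2 : aeval β u * aeval β (minpoly k (α + algebraMap k A c)) = 1 := by
        rw [← map_mul]; exact hub
      rw [h2, one_mul, hq]
  rw [← key, Algebra.adjoin_singleton_eq_range_aeval]
  exact ⟨_, rfl⟩

theorem aux_field_monogenic [CharZero k] (K : Type*) [Field K] [Algebra k K]
    [Module.Finite k K] : ∃ γ : K, Algebra.adjoin k {γ} = ⊤ := by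
  haveI : FiniteDimensional k K := ‹Module.Finite k K›
  obtain ⟨α, hα⟩ := Field.exists_primitive_element k K
  refine ⟨α, ?_⟩
  have h1 := IntermediateField.adjoin_simple_toSubalgebra_of_isAlgebraic (IsIntegral.of_finite k α).isAlgebraic
  rw [hα, IntermediateField.top_toSubalgebra] at h1
  exact h1.symm

theorem aux_pi_monogenic [CharZero k] (N : ℕ) :
    ∀ (ι : Type u) [Fintype ι], Fintype.card ι = N →
    ∀ (K : ι → Type v) [∀ i, CommRing (K i)] [∀ i, Algebra k (K i)]
      [∀ i, Module.Finite k (K i)],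
    (∀ i, ∃ γ : K i, Algebra.adjoin k {γ} = ⊤) →
    ∃ γ : ∀ i, K i, Algebra.adjoin k {γ} = ⊤ := by
  induction N with
  | zero =>
    intro ι _ hcard K _ _ _ _
    haveI : IsEmpty ι := Fintype.card_eq_zero_iff.mp hcard
    haveI : Subsingleton (∀ i, K i) := ⟨fun f g => funext fun i => isEmptyElim i⟩
    exact ⟨0, aux_adjoin_top_of_subsingleton 0⟩
  | succ N ih =>
    intro ι _ hcard K _ _ _ hK
    obtain ⟨i₀⟩ : Nonempty ι := Fintype.card_pos_iff.mp (by omega)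
    classical
    let φ : (∀ i, K i) →ₐ[k] K i₀ × (∀ j : {i : ι // i ≠ i₀}, K j.1) :=
      (Pi.evalAlgHom k K i₀).prod (Pi.algHom k _ (fun j => Pi.evalAlgHom k K j.1))
    have hbij : Function.Bijective φ := by
      constructor
      · intro f g hfg
        have h1 : f i₀ = g i₀ := congrArg Prod.fst hfg
        have h2 := congrArg Prod.snd hfg
        funext i
        by_cases hi : i = i₀
        · subst hi; exact h1
        · exact congrFun h2 ⟨i, hi⟩
      · rintro ⟨a, g⟩
        refine ⟨fun i => if h : i = i₀ then h.symm ▸ a else g ⟨i, h⟩, ?_⟩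
        refine Prod.ext ?_ ?_
        · show (if h : i₀ = i₀ then h.symm ▸ a else _) = a
          simp
        · funext j
          show (if h : j.1 = i₀ then _ else g ⟨j.1, h⟩) = g j
          rw [dif_neg j.2]
    let e := AlgEquiv.ofBijective φ hbij
    have hsub : Fintype.card {i : ι // i ≠ i₀} = N := by
      have h1 := Fintype.card_subtype_compl (fun i : ι => i = i₀)
      have h2 := Fintype.card_subtype_eq i₀
      simp only [h2] at h1
      have : Fintype.card {i : ι // i ≠ i₀} = Fintype.card {x : ι // ¬x = i₀} := rfl
      omega
    have hrest := ih {i : ι // i ≠ i₀} hsub (fun j => K j.1) (fun j => hK j.1)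
    obtain ⟨γ, hγ⟩ := aux_prod_monogenic (hK i₀) hrest
    exact ⟨e.symm γ, aux_adjoin_top_map e.symm hγ⟩

theorem aux_monogenic_of_reduced [CharZero k] (R : Type u) [CommRing R] [Algebra k R]
    [Module.Finite k R] [IsReduced R] : ∃ γ : R, Algebra.adjoin k {γ} = ⊤ := by
  haveI : IsArtinianRing R := IsArtinianRing.of_finite k R
  haveI : Fintype (MaximalSpectrum R) := Fintype.ofFinite _
  letI instF : ∀ I : MaximalSpectrum R, Field (R ⧸ I.asIdeal) :=
    fun I => @Ideal.Quotient.field R _ I.asIdeal I.isMaximal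
  haveI instFin : ∀ I : MaximalSpectrum R, Module.Finite k (R ⧸ I.asIdeal) :=
    fun I => Module.Finite.of_surjective (Ideal.Quotient.mkₐ k I.asIdeal).toLinearMap
      Ideal.Quotient.mk_surjective
  let φ : R →ₐ[k] ∀ I : MaximalSpectrum R, R ⧸ I.asIdeal :=
    Pi.algHom k _ (fun I => Ideal.Quotient.mkₐ k I.asIdeal)
  have hφeq : ∀ x, φ x = IsArtinianRing.equivPi R x := fun x => rfl
  have hbij : Function.Bijective φ := by
    have h := (IsArtinianRing.equivPi R).bijective
    have : (φ : R → ∀ I : MaximalSpectrum R, R ⧸ I.asIdeal) = IsArtinianRing.equivPi R :=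
      funext hφeq
    rw [show (φ : R → _) = _ from this]
    exact h
  let e := AlgEquiv.ofBijective φ hbij
  have hKmono : ∀ I : MaximalSpectrum R, ∃ γ : R ⧸ I.asIdeal, Algebra.adjoin k {γ} = ⊤ :=
    fun I => aux_field_monogenic (R ⧸ I.asIdeal)
  obtain ⟨γp, hγp⟩ := aux_pi_monogenic (Fintype.card (MaximalSpectrum R))
    (MaximalSpectrum R) rfl _ hKmono
  exact ⟨e.symm γp, aux_adjoin_top_map e.symm hγp⟩

end Part1

section Quot

universe uk

variable {k : Type uk} {E : Type*} [Field k] [Ring E] [Algebra k E]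

theorem aux_aeval_mem_adjoin_singleton (x : E) (p : k[X]) :
    aeval x p ∈ Algebra.adjoin k {x} := by
  rw [Algebra.adjoin_singleton_eq_range_aeval]
  exact ⟨p, rfl⟩

set_option maxHeartbeats 1000000 in
theorem aux_quot (x y : E) (h : Commute x y) :
    ∃ (R : Type uk) (_ : CommRing R) (_ : Algebra k R) (ψ : R →ₐ[k] E) (a b : R),
      Function.Injective ψ ∧ ψ a = x ∧ ψ b = y ∧ Algebra.adjoin k {a, b} = ⊤ ∧
      (∀ r : R, ψ r ∈ Algebra.adjoin k ({x, y} : Set E)) := by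
  have hcomm : ∀ p : k[X], Commute ((Polynomial.aeval x : k[X] →ₐ[k] E) p) y := fun p =>
    (Algebra.commute_of_mem_adjoin_singleton_of_commute
      (aux_aeval_mem_adjoin_singleton x p) h.symm).symm
  set φ : Polynomial (Polynomial k) →ₐ[k] E := Polynomial.eval₂AlgHom (Polynomial.aeval x) y hcomm
    with hφdef
  have hφC : ∀ p : k[X], φ (Polynomial.C p) = aeval x p := fun p => eval₂_C _ _
  have hφX : φ Polynomial.X = y := eval₂_X _ _
  set I := RingHom.ker φ.toRingHom with hIdef
  refine ⟨Polynomial (Polynomial k) ⧸ I, inferInstance, inferInstance,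
    Ideal.Quotient.liftₐ I φ (fun a ha => show φ a = 0 from (RingHom.mem_ker (f := φ.toRingHom)).mp ha), Ideal.Quotient.mk I (Polynomial.C Polynomial.X),
    Ideal.Quotient.mk I Polynomial.X, ?_, ?_, ?_, ?_, ?_⟩
  · intro r s hrs
    obtain ⟨r, rfl⟩ := Ideal.Quotient.mk_surjective r
    obtain ⟨s, rfl⟩ := Ideal.Quotient.mk_surjective s
    simp only [Ideal.Quotient.liftₐ_apply, Ideal.Quotient.lift_mk] at hrs
    have hrs' : φ r = φ s := hrs
    rw [Ideal.Quotient.eq]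
    show r - s ∈ I
    rw [hIdef, RingHom.mem_ker]
    show φ (r - s) = 0
    rw [map_sub, hrs', sub_self]
  · rw [Ideal.Quotient.liftₐ_apply]
    show φ (Polynomial.C Polynomial.X) = x
    rw [hφC, aeval_X]
  · rw [Ideal.Quotient.liftₐ_apply]
    show φ Polynomial.X = y
    exact hφX
  · have htopT : Algebra.adjoin k
        ({Polynomial.C Polynomial.X, Polynomial.X} : Set (Polynomial (Polynomial k))) = ⊤ := by
      rw [Algebra.eq_top_iff]
      intro Q
      have halg : ∀ a : k, algebraMap k (Polynomial (Polynomial k)) a =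
          Polynomial.C (Polynomial.C a) := fun a => by
        rw [Polynomial.algebraMap_apply, Polynomial.algebraMap_apply, Algebra.algebraMap_self_apply]
      have hCmem : ∀ p : k[X], (Polynomial.C p : Polynomial (Polynomial k)) ∈
          Algebra.adjoin k ({Polynomial.C Polynomial.X, Polynomial.X} :
            Set (Polynomial (Polynomial k))) := by
        intro p
        induction p using Polynomial.induction_on with
        | C a =>
          rw [← halg a]
          exact Subalgebra.algebraMap_mem _ a
        | add p q hp hq => rw [map_add]; exact add_mem hp hq
        | monomial n a hn =>
          rw [map_mul, map_pow]
          apply mul_mem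
          · rw [← halg a]
            exact Subalgebra.algebraMap_mem _ a
          · apply pow_mem
            exact Algebra.subset_adjoin (Set.mem_insert _ _)
      induction Q using Polynomial.induction_on with
      | C p => exact hCmem p
      | add p q hp hq => exact add_mem hp hq
      | monomial n a hn =>
        apply mul_mem (hCmem a)
        apply pow_mem
        exact Algebra.subset_adjoin (Set.mem_insert_of_mem _ rfl)
    have hmap := AlgHom.map_adjoin (Ideal.Quotient.mkₐ k I)
      ({Polynomial.C Polynomial.X, Polynomial.X} : Set (Polynomial (Polynomial k)))
    rw [htopT, Set.image_pair] at hmap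
    have hr : (⊤ : Subalgebra k (Polynomial (Polynomial k))).map (Ideal.Quotient.mkₐ k I) = ⊤ :=
      (Algebra.map_top _).trans ((AlgHom.range_eq_top _).mpr (Ideal.Quotient.mkₐ_surjective k I))
    rw [hr] at hmap
    exact hmap.symm
  · intro r
    obtain ⟨q, rfl⟩ := Ideal.Quotient.mk_surjective r
    rw [Ideal.Quotient.liftₐ_apply]
    show φ q ∈ Algebra.adjoin k ({x, y} : Set E)
    induction q using Polynomial.induction_on with
    | C p =>
      rw [hφC]
      exact Algebra.adjoin_mono (Set.singleton_subset_iff.mpr (Set.mem_insert _ _))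
        (aux_aeval_mem_adjoin_singleton x p)
    | add p q hp hq => rw [map_add]; exact add_mem hp hq
    | monomial n a hn =>
      rw [map_mul, map_pow, hφC, hφX]
      apply mul_mem
      · exact Algebra.adjoin_mono (Set.singleton_subset_iff.mpr (Set.mem_insert _ _))
          (aux_aeval_mem_adjoin_singleton x a)
      · apply pow_mem
        exact Algebra.subset_adjoin (Set.mem_insert_of_mem _ rfl)

end Quot

theorem aux_squarefree_of_reduced {k R : Type*} [Field k] [CommRing R] [Algebra k R]
    [IsReduced R] [Module.Finite k R] (z : R) : Squarefree (minpoly k z) := by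
  intro d hd
  by_contra hdu
  obtain ⟨e', he'⟩ := hd
  have hzint : IsIntegral k z := IsIntegral.of_finite k z
  have hmp0 : minpoly k z ≠ 0 := minpoly.ne_zero hzint
  have hd0 : d ≠ 0 := by rintro rfl; exact hmp0 (by simpa using he')
  have he0 : e' ≠ 0 := by rintro rfl; exact hmp0 (by simpa using he')
  have hsq : (d * e') ^ 2 = minpoly k z * (e' * 1) := by rw [he']; ring
  have hy2 : (aeval z (d * e')) ^ 2 = 0 := by
    rw [← map_pow, hsq, map_mul, minpoly.aeval, zero_mul]
  have hy0 : aeval z (d * e') = 0 := IsNilpotent.eq_zero ⟨2, hy2⟩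
  have hdvd : minpoly k z ∣ d * e' := minpoly.dvd k z hy0
  have hne : d * e' ≠ 0 := mul_ne_zero hd0 he0
  have hdeg := Polynomial.natDegree_le_of_dvd hdvd hne
  rw [he', Polynomial.natDegree_mul (mul_ne_zero hd0 hd0) he0,
    Polynomial.natDegree_mul hd0 hd0, Polynomial.natDegree_mul hd0 he0] at hdeg
  have hdd : d.natDegree = 0 := by omega
  have hdC : d = Polynomial.C (d.coeff 0) := Polynomial.eq_C_of_natDegree_eq_zero hdd
  have ha : d.coeff 0 ≠ 0 := fun h0 => hd0 (by rw [hdC, h0, map_zero])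
  exact hdu (hdC ▸ Polynomial.isUnit_C.mpr (isUnit_iff_ne_zero.mpr ha))

section EndLemmas

variable {K V : Type*} [Field K] [CharZero K] [AddCommGroup V] [Module K V]
  [FiniteDimensional K V]

theorem aux_pair_gen {x y : Module.End K V} (h : Commute x y)
    (hx : x.IsSemisimple) (hy : y.IsSemisimple) :
    ∃ γ : Module.End K V, γ ∈ Algebra.adjoin K ({x, y} : Set (Module.End K V)) ∧
      γ.IsSemisimple ∧ x ∈ Algebra.adjoin K {γ} ∧ y ∈ Algebra.adjoin K {γ} := by
  obtain ⟨R, _, _, ψ, a, b, hinj, hxa, hyb, htop, hrange⟩ := aux_quot (k := K) x y h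
  haveI : FiniteDimensional K R := FiniteDimensional.of_injective ψ.toLinearMap hinj
  haveI : IsReduced R := ⟨fun r hr => by
    have h1 : IsNilpotent (ψ r) := hr.map ψ
    have h2 : (ψ r).IsSemisimple :=
      Module.End.IsSemisimple.of_mem_adjoin_pair h hx hy (hrange r)
    have h3 : ψ r = 0 := Module.End.eq_zero_of_isNilpotent_isSemisimple h1 h2
    exact hinj (h3.trans (map_zero ψ).symm)⟩
  obtain ⟨γ', hγ'⟩ := aux_monogenic_of_reduced (k := K) R
  have hmp : minpoly K (ψ γ') = minpoly K γ' := minpoly.algHom_eq ψ hinj γ'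
  refine ⟨ψ γ', hrange γ', ?_, ?_, ?_⟩
  · refine Module.End.isSemisimple_of_squarefree_aeval_eq_zero ?_ (minpoly.aeval K (ψ γ'))
    rw [hmp]
    exact aux_squarefree_of_reduced γ'
  · have ha : a ∈ Algebra.adjoin K {γ'} := by rw [hγ']; exact Algebra.mem_top
    rw [Algebra.adjoin_singleton_eq_range_aeval, AlgHom.mem_range] at ha
    obtain ⟨p, hp⟩ := ha
    rw [← hxa, ← hp, ← aeval_algHom_apply]
    exact aux_aeval_mem_adjoin_singleton _ p
  · have hb : b ∈ Algebra.adjoin K {γ'} := by rw [hγ']; exact Algebra.mem_top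
    rw [Algebra.adjoin_singleton_eq_range_aeval, AlgHom.mem_range] at hb
    obtain ⟨p, hp⟩ := hb
    rw [← hyb, ← hp, ← aeval_algHom_apply]
    exact aux_aeval_mem_adjoin_singleton _ p

theorem aux_pair_nil {γ N : Module.End K V} (h : Commute γ N)
    (hnil : IsNilpotent N) (hsf : Squarefree (minpoly K γ)) :
    ∀ z ∈ Algebra.adjoin K ({γ, N} : Set (Module.End K V)),
      ∃ p : K[X], z = aeval (γ + N) p := by
  obtain ⟨R, _, _, ψ, a, b, hinj, hxa, hyb, htop, hrange⟩ := aux_quot (k := K) γ N h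
  haveI : FiniteDimensional K R := FiniteDimensional.of_injective ψ.toLinearMap hinj
  have haf : aeval a (minpoly K γ) = 0 := by
    apply hinj
    rw [map_zero, ← aeval_algHom_apply, hxa]
    exact minpoly.aeval K γ
  have hbnil : IsNilpotent b := by
    obtain ⟨e, he⟩ := hnil
    refine ⟨e, hinj ?_⟩
    rw [map_pow, map_zero, hyb]
    exact he
  have hsep : (minpoly K γ).Separable := PerfectField.separable_iff_squarefree.mpr hsf
  obtain ⟨u, v, huv⟩ := hsep
  have hf' : IsUnit (aeval a (derivative (minpoly K γ))) := by
    have hv := congrArg (aeval a) huv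
    rw [map_add, map_mul, map_mul, map_one, haf, mul_zero, zero_add] at hv
    exact IsUnit.of_mul_eq_one _ ((mul_comm _ _).trans hv)
  have htop' := aux_core_adjoin htop hbnil haf hf'
  intro z hz
  have hle : Algebra.adjoin K ({γ, N} : Set (Module.End K V)) ≤ ψ.range := by
    refine Algebra.adjoin_le ?_
    rintro w hw
    rcases hw with rfl | hw
    · exact (AlgHom.mem_range ψ).mpr ⟨a, hxa⟩
    · rw [Set.mem_singleton_iff] at hw
      subst hw
      exact (AlgHom.mem_range ψ).mpr ⟨b, hyb⟩
  obtain ⟨r, hr⟩ := (AlgHom.mem_range ψ).mp (hle hz)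
  have hrmem : r ∈ Algebra.adjoin K {a + b} := by rw [htop']; exact Algebra.mem_top
  rw [Algebra.adjoin_singleton_eq_range_aeval, AlgHom.mem_range] at hrmem
  obtain ⟨p, hp⟩ := hrmem
  refine ⟨p, ?_⟩
  rw [← hr, ← hp, ← aeval_algHom_apply, map_add, hxa, hyb]

theorem aux_fold (l : List (Module.End K V))
    (hc : ∀ x ∈ l, ∀ y ∈ l, Commute x y) (hss : ∀ x ∈ l, x.IsSemisimple) :
    ∃ γ : Module.End K V, γ.IsSemisimple ∧ (∀ x ∈ l, x ∈ Algebra.adjoin K {γ}) ∧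
      ∀ z : Module.End K V, (∀ x ∈ l, Commute z x) → Commute z γ := by
  induction l with
  | nil =>
    exact ⟨0, Module.End.isSemisimple_zero, by simp, fun z _ => Commute.zero_right z⟩
  | cons x l ih =>
    obtain ⟨γ₀, hγ₀ss, hγ₀mem, hγ₀comm⟩ := ih
      (fun a ha b hb => hc _ (List.mem_cons_of_mem _ ha) _ (List.mem_cons_of_mem _ hb))
      (fun a ha => hss _ (List.mem_cons_of_mem _ ha))
    have hxγ₀ : Commute x γ₀ := hγ₀comm x
      (fun a ha => hc _ (List.mem_cons_self) _ (List.mem_cons_of_mem _ ha))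
    obtain ⟨γ, hγmem, hγss, hxmem, hγ₀mem'⟩ :=
      aux_pair_gen hxγ₀ (hss x (List.mem_cons_self)) hγ₀ss
    refine ⟨γ, hγss, ?_, ?_⟩
    · intro a ha
      rcases List.mem_cons.mp ha with rfl | ha
      · exact hxmem
      · exact Algebra.adjoin_le (Set.singleton_subset_iff.mpr hγ₀mem') (hγ₀mem a ha)
    · intro z hz
      have h1 : Commute z x := hz x (List.mem_cons_self)
      have h2 : Commute z γ₀ := hγ₀comm z (fun a ha => hz a (List.mem_cons_of_mem _ ha))
      refine Algebra.commute_of_mem_adjoin_of_forall_mem_commute hγmem ?_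
      intro w hw
      rcases hw with rfl | hw
      · exact h1
      · rw [Set.mem_singleton_iff] at hw
        subst hw
        exact h2

end EndLemmas

section EndMain

variable {K V : Type*} [Field K] [CharZero K] [AddCommGroup V] [Module K V]
  [FiniteDimensional K V]

theorem aux_main_end (m : ℕ) (A : Fin m → Module.End K V)
    (hcomm : ∀ i j, A i * A j = A j * A i)
    (hdiag : {i | ¬ (minpoly K (A i)).Separable}.Subsingleton) :
    ∃ C : Module.End K V, ∀ i, ∃ p : K[X], A i = aeval C p := by
  classical
  by_cases hall : ∀ i, (minpoly K (A i)).Separable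
  · set l := (List.finRange m).map A with hldef
    have hcl : ∀ x ∈ l, ∀ y ∈ l, Commute x y := by
      intro x hx y hy
      obtain ⟨i, -, rfl⟩ := List.mem_map.mp hx
      obtain ⟨j, -, rfl⟩ := List.mem_map.mp hy
      exact hcomm i j
    have hssl : ∀ x ∈ l, x.IsSemisimple := by
      intro x hx
      obtain ⟨i, -, rfl⟩ := List.mem_map.mp hx
      exact Module.End.isSemisimple_of_squarefree_aeval_eq_zero (hall i).squarefree
        (minpoly.aeval K (A i))
    obtain ⟨γ, hγss, hγmem, -⟩ := aux_fold l hcl hssl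
    refine ⟨γ, fun i => ?_⟩
    have hx := hγmem (A i) (List.mem_map.mpr ⟨i, List.mem_finRange i, rfl⟩)
    rw [Algebra.adjoin_singleton_eq_range_aeval, AlgHom.mem_range] at hx
    obtain ⟨p, hp⟩ := hx
    exact ⟨p, hp.symm⟩
  · push_neg at hall
    obtain ⟨j₀, hj₀⟩ := hall
    have hbad : ∀ i, ¬ (minpoly K (A i)).Separable → i = j₀ := fun i hi => hdiag hi hj₀
    obtain ⟨N, hNmem, S, hSmem, hNnil, hSss, hsum⟩ :=
      Module.End.exists_isNilpotent_isSemisimple (f := A j₀)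
    have hSA : ∀ i, Commute (A i) S := fun i =>
      Algebra.commute_of_mem_adjoin_singleton_of_commute hSmem (hcomm i j₀)
    have hNA : ∀ i, Commute (A i) N := fun i =>
      Algebra.commute_of_mem_adjoin_singleton_of_commute hNmem (hcomm i j₀)
    have hNS : Commute N S :=
      Algebra.commute_of_mem_adjoin_singleton_of_commute hSmem
        (Algebra.commute_of_mem_adjoin_self hNmem).symm
    set l := S :: ((List.finRange m).filter (fun i => decide (i ≠ j₀))).map A with hldef
    have hmeml : ∀ x ∈ l, x = S ∨ ∃ i, i ≠ j₀ ∧ x = A i := by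
      intro x hx
      rcases List.mem_cons.mp hx with rfl | hx
      · exact Or.inl rfl
      · obtain ⟨i, hi, rfl⟩ := List.mem_map.mp hx
        have h2 := (List.mem_filter.mp hi).2
        exact Or.inr ⟨i, by simpa using h2, rfl⟩
    have hAmem : ∀ i, i ≠ j₀ → A i ∈ l := by
      intro i hi
      refine List.mem_cons_of_mem _ (List.mem_map.mpr ⟨i, ?_, rfl⟩)
      exact List.mem_filter.mpr ⟨List.mem_finRange i, by simpa using hi⟩
    have hcl : ∀ x ∈ l, ∀ y ∈ l, Commute x y := by
      intro x hx y hy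
      rcases hmeml x hx with rfl | ⟨i, hi, rfl⟩ <;> rcases hmeml y hy with rfl | ⟨j, hj, rfl⟩
      · rfl
      · exact (hSA j).symm
      · exact hSA i
      · exact hcomm i j
    have hssl : ∀ x ∈ l, x.IsSemisimple := by
      intro x hx
      rcases hmeml x hx with rfl | ⟨i, hi, rfl⟩
      · exact hSss
      · refine Module.End.isSemisimple_of_squarefree_aeval_eq_zero ?_ (minpoly.aeval K (A i))
        refine Polynomial.Separable.squarefree ?_
        by_contra hns
        exact hi (hbad i hns)
    obtain ⟨γ, hγss, hγmem, hγpres⟩ := aux_fold l hcl hssl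
    have hNγ : Commute N γ := by
      refine hγpres N ?_
      intro x hx
      rcases hmeml x hx with rfl | ⟨i, hi, rfl⟩
      · exact hNS
      · exact (hNA i).symm
    have hkey := aux_pair_nil hNγ.symm hNnil hγss.minpoly_squarefree
    refine ⟨γ + N, fun i => ?_⟩
    apply hkey
    by_cases hi : i = j₀
    · subst hi
      rw [hsum]
      refine add_mem (Algebra.subset_adjoin (Set.mem_insert_of_mem _ rfl)) ?_
      exact Algebra.adjoin_mono (Set.singleton_subset_iff.mpr (Set.mem_insert _ _))
        (hγmem S (List.mem_cons_self))
    · exact Algebra.adjoin_mono (Set.singleton_subset_iff.mpr (Set.mem_insert _ _))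
        (hγmem (A i) (hAmem i hi))

end EndMain

theorem stmt_12 (k : Type*) [Field k] [CharZero k] (n m : ℕ) (hm : 2 ≤ m)
    (A : Fin m → Matrix (Fin n) (Fin n) k)
    (hcomm : ∀ i j, A i * A j = A j * A i)
    (hdiag : {i | ¬ (minpoly k (A i)).Separable}.Subsingleton) :
    ∃ C : Matrix (Fin n) (Fin n) k, ∀ i, ∃ p : Polynomial k,
      A i = Polynomial.aeval C p := by
  classical
  let ε : Matrix (Fin n) (Fin n) k ≃ₐ[k] ((Fin n → k) →ₗ[k] (Fin n → k)) :=
    Matrix.toLinAlgEquiv'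
  have hdiag' : {i | ¬ (minpoly k (ε (A i))).Separable}.Subsingleton := by
    have heq : ∀ i, minpoly k (ε (A i)) = minpoly k (A i) := fun i =>
      minpoly.algEquiv_eq ε (A i)
    simp only [Set.Subsingleton, Set.mem_setOf_eq, heq] at hdiag ⊢
    exact hdiag
  obtain ⟨C', hC'⟩ := aux_main_end (V := Fin n → k) m (fun i => ε (A i))
    (fun i j => by rw [← map_mul, ← map_mul, hcomm i j]) hdiag'
  refine ⟨ε.symm C', fun i => ?_⟩
  obtain ⟨p, hp⟩ := hC' i
  refine ⟨p, ?_⟩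
  have h2 := congrArg ε.symm hp
  rw [AlgEquiv.symm_apply_apply] at h2
  rw [h2]
  exact (aeval_algHom_apply ε.symm C' p).symm
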